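/- Let M ≥ 3 and let r : Fin M → ℕ satisfy r(i) ≥ 1 for all i and r(i) ≥ 2 for at least one i. Then there exists a subset S ⊆ Fin M with S nonempty and S ≠ Fin M such that ∏_{i ∈ S} r(i) ≠ ∏_{i ∉ S} r(i). -/

import Mathlib

open BigOperators

theorem splitting_lemma (M : ℕ) (hM : 3 ≤ M) (r : Fin M → ℕ)
    (h1 : ∀ i, 1 ≤ r i) (h2 : ∃ i, 2 ≤ r i) :
    ∃ S : Finset (Fin M), S.Nonempty ∧ S ≠ Finset.univ ∧
      (∏ i ∈ S, r i) ≠ ∏ i ∈ Sᶜ, r i := by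
  obtain ⟨i0, hi0⟩ := h2
  have hiprod : ∏ i ∈ ({i0} : Finset (Fin M)), r i = r i0 := Finset.prod_singleton r i0
  by_cases hA : ∏ i ∈ ({i0} : Finset (Fin M))ᶜ, r i = r i0
  · -- find j ≠ i0 with r j ≥ 2
    have hj : ∃ j ∈ ({i0} : Finset (Fin M))ᶜ, 2 ≤ r j := by
      by_contra h
      push_neg at h
      have : ∏ i ∈ ({i0} : Finset (Fin M))ᶜ, r i = 1 := by
        apply Finset.prod_eq_one
        intro x hx
        have := h x hx
        have := h1 x
        omega
      omega
    obtain ⟨j, hjmem, hj2⟩ := hj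
    have hji : j ≠ i0 := by
      simp only [Finset.mem_compl, Finset.mem_singleton] at hjmem
      exact hjmem
    refine ⟨{i0, j}, ⟨i0, Finset.mem_insert_self _ _⟩, ?_, ?_⟩
    · intro h
      have hc : ({i0, j} : Finset (Fin M)).card = 2 := by
        rw [Finset.card_insert_of_notMem (by simp [Ne.symm hji]), Finset.card_singleton]
      rw [h, Finset.card_univ, Fintype.card_fin] at hc
      omega
    · have hS : ∏ i ∈ ({i0, j} : Finset (Fin M)), r i = r i0 * r j :=
        Finset.prod_pair (Ne.symm hji)
      have hcompl : ({i0, j} : Finset (Fin M))ᶜ = ({i0} : Finset (Fin M))ᶜ \ {j} := by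
        ext x; simp [and_comm, not_or]
      have hsplit : r j * ∏ i ∈ ({i0} : Finset (Fin M))ᶜ \ {j}, r i
          = ∏ i ∈ ({i0} : Finset (Fin M))ᶜ, r i :=
        (Finset.prod_eq_mul_prod_sdiff_singleton_of_mem hjmem r).symm
      rw [hS, hcompl]
      intro heq
      rw [← heq] at hsplit
      rw [hA] at hsplit
      have h4 : 2 * (r i0 * 2) ≤ r j * (r i0 * r j) :=
        Nat.mul_le_mul hj2 (Nat.mul_le_mul (le_refl (r i0)) hj2)
      omega
  · exact ⟨{i0}, Finset.singleton_nonempty i0, by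
      intro h
      have hc : ({i0} : Finset (Fin M)).card = 1 := Finset.card_singleton i0
      rw [h, Finset.card_univ, Fintype.card_fin] at hc
      omega, by rw [hiprod]; exact fun h => hA h.symm⟩
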